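/- For m ≥ 2 and any (λ, μ) ≠ (0,0), the stabilizer in O(2) of the polynomial λ·p_m(x,y) + μ·q_m(x,y) is conjugate in O(2) to the dihedral group D_m; in particular it strictly contains K_m. -/

import Mathlib

open MvPolynomial Real Matrix Complex

/-- The rotation of `ℝ²` by angle `θ`. -/
noncomputable def rotMat (θ : ℝ) : Matrix (Fin 2) (Fin 2) ℝ :=
  !![Real.cos θ, -Real.sin θ; Real.sin θ, Real.cos θ]

/-- The reflection `τ(x,y) = (x,-y)`. -/
noncomputable def reflMat : Matrix (Fin 2) (Fin 2) ℝ := !![1, 0; 0, -1]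

/-- The stabilizer in `O(2)` of a polynomial `P`. -/
def polyStab (P : MvPolynomial (Fin 2) ℝ) : Set (Matrix (Fin 2) (Fin 2) ℝ) :=
  {A | A * Aᵀ = 1 ∧ ∀ v : Fin 2 → ℝ, eval (A.mulVec v) P = eval v P}

/-- The cyclic group `K_m` of rotations of order `m`. -/
noncomputable def CycSet (m : ℕ) : Set (Matrix (Fin 2) (Fin 2) ℝ) :=
  {A | ∃ k : ℕ, k < m ∧ A = rotMat (2 * π * k / m)}

/-- The dihedral group `D_m = ⟨σ_m, τ⟩ ⊆ O(2)`, of order `2m`. -/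
noncomputable def DihSet (m : ℕ) : Set (Matrix (Fin 2) (Fin 2) ℝ) :=
  {A | ∃ k : ℕ, k < m ∧
    (A = rotMat (2 * π * k / m) ∨ A = rotMat (2 * π * k / m) * reflMat)}

/- ### Auxiliary lemmas -/

noncomputable def zc (v : Fin 2 → ℝ) : ℂ := (v 0 : ℂ) + (v 1 : ℂ) * Complex.I

lemma rot_mul (a b : ℝ) : rotMat a * rotMat b = rotMat (a + b) := by
  ext i j
  fin_cases i <;> fin_cases j <;>
    simp [rotMat, Matrix.mul_apply, Fin.sum_univ_two, Real.cos_add, Real.sin_add] <;> ring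

lemma rot_transpose (a : ℝ) : (rotMat a)ᵀ = rotMat (-a) := by
  ext i j
  fin_cases i <;> fin_cases j <;> simp [rotMat]

lemma rot_orth (a : ℝ) : rotMat a * (rotMat a)ᵀ = 1 := by
  rw [rot_transpose, rot_mul]
  ext i j
  fin_cases i <;> fin_cases j <;> simp [rotMat, Matrix.one_apply]

lemma refl_transpose : reflMatᵀ = reflMat := by
  ext i j; fin_cases i <;> fin_cases j <;> simp [reflMat]

lemma refl_orth : reflMat * reflMatᵀ = 1 := by
  rw [refl_transpose]
  ext i j
  fin_cases i <;> fin_cases j <;>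
    simp [reflMat, Matrix.mul_apply, Fin.sum_univ_two, Matrix.one_apply]

lemma refl_rot (a : ℝ) : reflMat * rotMat a = rotMat (-a) * reflMat := by
  ext i j
  fin_cases i <;> fin_cases j <;>
    simp [reflMat, rotMat, Matrix.mul_apply, Fin.sum_univ_two]

lemma rot_per (θ : ℝ) (q : ℤ) : rotMat (θ + 2 * π * q) = rotMat θ := by
  have h1 : θ + 2 * π * q = θ + q * (2 * π) := by ring
  ext i j
  fin_cases i <;> fin_cases j <;>
    simp [rotMat, h1, Real.cos_add_int_mul_two_pi, Real.sin_add_int_mul_two_pi]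

lemma rot_det (θ : ℝ) : (rotMat θ).det = 1 := by
  rw [rotMat, Matrix.det_fin_two_of]
  have := Real.sin_sq_add_cos_sq θ
  nlinarith

lemma refl_det : reflMat.det = -1 := by
  rw [reflMat, Matrix.det_fin_two_of]; norm_num

lemma zc_rot (θ : ℝ) (v : Fin 2 → ℝ) :
    zc ((rotMat θ).mulVec v) = Complex.exp (θ * Complex.I) * zc v := by
  apply Complex.ext <;>
    simp [zc, rotMat, Matrix.mulVec, dotProduct, Fin.sum_univ_two,
      Complex.exp_ofReal_mul_I_re, Complex.exp_ofReal_mul_I_im,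
      Complex.cos_ofReal_re, Complex.sin_ofReal_re] <;> ring

lemma zc_refl (v : Fin 2 → ℝ) : zc (reflMat.mulVec v) = starRingEnd ℂ (zc v) := by
  apply Complex.ext <;>
    simp [zc, reflMat, Matrix.mulVec, dotProduct, Fin.sum_univ_two]

lemma zc_surj (w : ℂ) : ∃ v : Fin 2 → ℝ, zc v = w :=
  ⟨![w.re, w.im], by apply Complex.ext <;> simp [zc]⟩

lemma re_sep (w₁ w₂ : ℂ) (h : ∀ u : ℂ, (w₁ * u).re = (w₂ * u).re) : w₁ = w₂ := by
  apply Complex.ext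
  · simpa using h 1
  · simpa using h (-Complex.I)

lemma orth_cases (A : Matrix (Fin 2) (Fin 2) ℝ) (hA : A * Aᵀ = 1) :
    ∃ θ : ℝ, A = rotMat θ ∨ A = rotMat θ * reflMat := by
  have hA' : Aᵀ * A = 1 := mul_eq_one_comm.mp hA
  set a := A 0 0; set b := A 0 1; set c := A 1 0; set d := A 1 1
  have h00 : a * a + c * c = 1 := by
    have := congrFun (congrFun hA' 0) 0
    simpa [Matrix.mul_apply, Fin.sum_univ_two, Matrix.one_apply] using this
  have h01 : a * b + c * d = 0 := by
    have := congrFun (congrFun hA' 0) 1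
    simpa [Matrix.mul_apply, Fin.sum_univ_two, Matrix.one_apply] using this
  have h11 : b * b + d * d = 1 := by
    have := congrFun (congrFun hA' 1) 1
    simpa [Matrix.mul_apply, Fin.sum_univ_two, Matrix.one_apply] using this
  set w : ℂ := ⟨a, c⟩ with hw
  have habs : ‖w‖ = 1 := by
    rw [Complex.norm_def, Complex.normSq_mk]
    rw [show a * a + c * c = 1 from h00]; simp
  have hw0 : w ≠ 0 := by
    intro h; rw [h] at habs; simp at habs
  set θ := Complex.arg w with hθ
  have hcos : Real.cos θ = a := by
    rw [hθ, Complex.cos_arg hw0, habs]; simp [hw]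
  have hsin : Real.sin θ = c := by
    rw [hθ, Complex.sin_arg, habs]; simp [hw]
  set t := d * Real.cos θ - b * Real.sin θ with ht
  have hb : b = -t * Real.sin θ := by
    rw [ht, hcos, hsin]; linear_combination a * h01 - b * h00
  have hd : d = t * Real.cos θ := by
    rw [ht, hcos, hsin]; linear_combination c * h01 - d * h00
  have ht2 : t * t = 1 := by
    rw [ht, hcos, hsin]
    linear_combination (b * b + d * d) * h00 + h11 - (a * b + c * d) * h01
  refine ⟨θ, ?_⟩
  rcases mul_self_eq_one_iff.mp ht2 with h | h
  · left
    ext i j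
    fin_cases i <;> fin_cases j <;> simp [rotMat] <;>
      first
        | exact hcos.symm
        | exact hsin.symm
        | exact hb.trans (by rw [h]; ring)
        | exact hd.trans (by rw [h]; ring)
  · right
    ext i j
    fin_cases i <;> fin_cases j <;>
      simp [rotMat, reflMat, Matrix.mul_apply, Fin.sum_univ_two] <;>
      first
        | exact hcos.symm
        | exact hsin.symm
        | exact hb.trans (by rw [h]; ring)
        | exact hd.trans (by rw [h]; ring)

lemma rot_cond (m : ℕ) (hm : 1 ≤ m) (c : ℂ) (hc : c ≠ 0) (θ : ℝ) :
    (∀ v : Fin 2 → ℝ, (c * zc ((rotMat θ).mulVec v) ^ m).re = (c * zc v ^ m).re) ↔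
      Complex.exp ((m * θ : ℝ) * Complex.I) = 1 := by
  have hexp : ∀ v : Fin 2 → ℝ,
      c * zc ((rotMat θ).mulVec v) ^ m
        = c * Complex.exp ((m * θ : ℝ) * Complex.I) * zc v ^ m := by
    intro v
    rw [zc_rot, mul_pow, ← Complex.exp_nat_mul]
    rw [show ((m : ℂ) * ((θ : ℂ) * Complex.I)) = ((m * θ : ℝ) : ℂ) * Complex.I by
      push_cast; ring]
    ring
  constructor
  · intro h
    have h' : ∀ u : ℂ, (c * Complex.exp ((m * θ : ℝ) * Complex.I) * u).re = (c * u).re := by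
      intro u
      obtain ⟨z, hz⟩ := IsAlgClosed.exists_pow_nat_eq u (Nat.lt_of_lt_of_le Nat.zero_lt_one hm)
      obtain ⟨v, hv⟩ := zc_surj z
      have := h v
      rw [hexp v, hv, hz] at this
      exact this
    have := re_sep _ _ h'
    have h2 : c * Complex.exp ((m * θ : ℝ) * Complex.I) = c * 1 := by rw [mul_one]; exact this
    exact mul_left_cancel₀ hc h2
  · intro h v
    rw [hexp v, h, mul_one]

lemma refl_cond (m : ℕ) (hm : 1 ≤ m) (c : ℂ) (hc : c ≠ 0) (θ : ℝ) :
    (∀ v : Fin 2 → ℝ, (c * zc ((rotMat θ * reflMat).mulVec v) ^ m).re = (c * zc v ^ m).re) ↔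
      Complex.exp ((m * θ : ℝ) * Complex.I) = starRingEnd ℂ c / c := by
  have hz : ∀ v : Fin 2 → ℝ, zc ((rotMat θ * reflMat).mulVec v)
      = Complex.exp ((θ : ℂ) * Complex.I) * starRingEnd ℂ (zc v) := by
    intro v
    rw [← Matrix.mulVec_mulVec, zc_rot, zc_refl]
  have hre : ∀ v : Fin 2 → ℝ,
      (c * zc ((rotMat θ * reflMat).mulVec v) ^ m).re
        = ((starRingEnd ℂ c * Complex.exp ((-(m * θ) : ℝ) * Complex.I)) * zc v ^ m).re := by
    intro v
    rw [hz, mul_pow, ← Complex.exp_nat_mul, ← map_pow]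
    rw [← Complex.conj_re (c * (Complex.exp (↑m * (↑θ * Complex.I)) * (starRingEnd ℂ) (zc v ^ m)))]
    congr 1
    rw [_root_.map_mul, _root_.map_mul, Complex.conj_conj, ← Complex.exp_conj]
    rw [show (starRingEnd ℂ) ((m : ℂ) * ((θ : ℂ) * Complex.I)) = ((-(m * θ) : ℝ) : ℂ) * Complex.I by
      simp [Complex.conj_I]; ring]
    ring
  constructor
  · intro h
    have h' : ∀ u : ℂ,
        ((starRingEnd ℂ c * Complex.exp ((-(m * θ) : ℝ) * Complex.I)) * u).re = (c * u).re := by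
      intro u
      obtain ⟨z, hzz⟩ := IsAlgClosed.exists_pow_nat_eq u (Nat.lt_of_lt_of_le Nat.zero_lt_one hm)
      obtain ⟨v, hv⟩ := zc_surj z
      have := h v
      rw [hre v, hv, hzz] at this
      exact this
    have heq := re_sep _ _ h'
    have hmul : Complex.exp ((-(m * θ) : ℝ) * Complex.I)
        * Complex.exp ((m * θ : ℝ) * Complex.I) = 1 := by
      rw [← Complex.exp_add]
      rw [show ((-(m * θ) : ℝ) : ℂ) * Complex.I + ((m * θ : ℝ) : ℂ) * Complex.I = 0 by
        push_cast; ring]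
      exact Complex.exp_zero
    have : starRingEnd ℂ c = c * Complex.exp ((m * θ : ℝ) * Complex.I) := by
      calc starRingEnd ℂ c
          = starRingEnd ℂ c * (Complex.exp ((-(m * θ) : ℝ) * Complex.I)
              * Complex.exp ((m * θ : ℝ) * Complex.I)) := by rw [hmul, mul_one]
        _ = c * Complex.exp ((m * θ : ℝ) * Complex.I) := by rw [← mul_assoc, heq]
    rw [this]
    field_simp
  · intro h v
    rw [hre v]
    congr 2
    rw [show starRingEnd ℂ c = c * Complex.exp ((m * θ : ℝ) * Complex.I) by
      rw [h]; field_simp]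
    rw [mul_assoc, ← Complex.exp_add]
    rw [show ((m * θ : ℝ) : ℂ) * Complex.I + ((-(m * θ) : ℝ) : ℂ) * Complex.I = 0 by
      push_cast; ring]
    rw [Complex.exp_zero, mul_one]

/-- For `m ≥ 2` and `(λ,μ) ≠ (0,0)`, the stabilizer in `O(2)` of
`λ·p_m + μ·q_m` is conjugate in `O(2)` to the dihedral group `D_m`;
in particular it strictly contains the rotation group `K_m`. -/
theorem stmt7 (m : ℕ) (hm : 2 ≤ m) (lam mu : ℝ) (hlm : (lam, mu) ≠ (0, 0))
    (p q : MvPolynomial (Fin 2) ℝ)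
    (hp : ∀ v : Fin 2 → ℝ, eval v p = (((v 0 : ℂ) + (v 1 : ℂ) * Complex.I) ^ m).re)
    (hq : ∀ v : Fin 2 → ℝ, eval v q = (((v 0 : ℂ) + (v 1 : ℂ) * Complex.I) ^ m).im) :
    (∃ B : Matrix (Fin 2) (Fin 2) ℝ, B * Bᵀ = 1 ∧
        polyStab (lam • p + mu • q) = (fun A => B * A * Bᵀ) '' DihSet m) ∧
      CycSet m ⊂ polyStab (lam • p + mu • q) := by
  have hm1 : 1 ≤ m := le_trans one_le_two hm
  have hm0 : (m : ℝ) ≠ 0 := by positivity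
  set c : ℂ := (lam : ℂ) - (mu : ℂ) * Complex.I with hcdef
  have hc : c ≠ 0 := by
    intro h
    apply hlm
    have h1 := congrArg Complex.re h
    have h2 := congrArg Complex.im h
    simp [hcdef] at h1 h2
    simp [h1, h2]
  have hPc : ∀ v : Fin 2 → ℝ, eval v (lam • p + mu • q) = (c * zc v ^ m).re := by
    intro v
    rw [map_add, MvPolynomial.smul_eval, MvPolynomial.smul_eval, hp v, hq v]
    rw [show c * zc v ^ m = c * (zc v ^ m) from rfl, Complex.mul_re]
    simp [hcdef, zc]
  have hmem : ∀ A : Matrix (Fin 2) (Fin 2) ℝ, A ∈ polyStab (lam • p + mu • q) ↔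
      (A * Aᵀ = 1 ∧ ∀ v, (c * zc (A.mulVec v) ^ m).re = (c * zc v ^ m).re) := by
    intro A
    simp only [polyStab, Set.mem_setOf_eq]
    refine and_congr_right fun _ => forall_congr' fun v => ?_
    rw [hPc, hPc]
  set δ := Complex.arg (starRingEnd ℂ c / c) with hδdef
  have habs1 : ‖starRingEnd ℂ c / c‖ = 1 := by
    rw [norm_div, Complex.norm_conj]
    exact div_self (norm_ne_zero_iff.mpr hc)
  have hδ : starRingEnd ℂ c / c = Complex.exp ((δ : ℂ) * Complex.I) := by
    have h := Complex.norm_mul_exp_arg_mul_I (starRingEnd ℂ c / c)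
    rw [habs1] at h
    simpa using h.symm
  set θ₀ := δ / m with hθ₀def
  have horthRefl : ∀ θ : ℝ, (rotMat θ * reflMat) * (rotMat θ * reflMat)ᵀ = 1 := by
    intro θ
    rw [Matrix.transpose_mul, show rotMat θ * reflMat * (reflMatᵀ * (rotMat θ)ᵀ)
      = rotMat θ * (reflMat * reflMatᵀ) * (rotMat θ)ᵀ by noncomm_ring, refl_orth, mul_one,
      rot_orth]
  have hrotE : ∀ θ : ℝ, rotMat θ ∈ polyStab (lam • p + mu • q) ↔
      Complex.exp ((m * θ : ℝ) * Complex.I) = 1 := by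
    intro θ
    rw [hmem, and_iff_right (rot_orth θ), rot_cond m hm1 c hc θ]
  have hreflE : ∀ θ : ℝ, rotMat θ * reflMat ∈ polyStab (lam • p + mu • q) ↔
      Complex.exp ((m * θ : ℝ) * Complex.I) = starRingEnd ℂ c / c := by
    intro θ
    rw [hmem, and_iff_right (horthRefl θ), refl_cond m hm1 c hc θ]
  -- the explicit description of the stabilizer
  have hstab : polyStab (lam • p + mu • q) =
      {A | (∃ n : ℤ, A = rotMat (2 * π * n / m)) ∨
        ∃ n : ℤ, A = rotMat (θ₀ + 2 * π * n / m) * reflMat} := by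
    ext A
    simp only [Set.mem_setOf_eq]
    constructor
    · intro hAmem
      have hA1 : A * Aᵀ = 1 := ((hmem A).mp hAmem).1
      obtain ⟨θ, hcase⟩ := orth_cases A hA1
      rcases hcase with rfl | rfl
      · left
        obtain ⟨n, hn⟩ := Complex.exp_eq_one_iff.mp ((hrotE θ).mp hAmem)
        have hnR : (m : ℝ) * θ = n * (2 * π) := by
          have := congrArg Complex.im hn
          simpa using this
        refine ⟨n, ?_⟩
        have hθeq : θ = 2 * π * n / m := by
          rw [eq_div_iff hm0]
          linear_combination hnR
        rw [hθeq]
      · right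
        have h1 := (hreflE θ).mp hAmem
        rw [hδ, Complex.exp_eq_exp_iff_exists_int] at h1
        obtain ⟨n, hn⟩ := h1
        have hnR : (m : ℝ) * θ = δ + n * (2 * π) := by
          have := congrArg Complex.im hn
          simpa using this
        refine ⟨n, ?_⟩
        have hθeq : θ = θ₀ + 2 * π * n / m := by
          rw [hθ₀def]
          field_simp
          linarith [hnR]
        rw [hθeq]
    · rintro (⟨n, rfl⟩ | ⟨n, rfl⟩)
      · rw [hrotE, Complex.exp_eq_one_iff]
        refine ⟨n, ?_⟩
        have : (m : ℝ) * (2 * π * n / m) = n * (2 * π) := by field_simp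
        rw [this]
        push_cast
        ring
      · rw [hreflE, hδ]
        have : (m : ℝ) * (θ₀ + 2 * π * n / m) = δ + n * (2 * π) := by
          rw [hθ₀def]; field_simp
        rw [this]
        rw [show ((δ + n * (2 * π) : ℝ) : ℂ) * Complex.I
            = (δ : ℂ) * Complex.I + (n : ℂ) * (2 * π * Complex.I) by push_cast; ring]
        rw [Complex.exp_add, Complex.exp_int_mul_two_pi_mul_I, mul_one]
  -- conjugation by B = rotMat (θ₀ / 2)
  set B := rotMat (θ₀ / 2) with hBdef
  have hconj_rot : ∀ φ : ℝ, B * rotMat φ * Bᵀ = rotMat φ := by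
    intro φ
    rw [hBdef, rot_transpose, rot_mul, rot_mul]
    congr 1
    ring_nf
  have hconj_refl : ∀ φ : ℝ, B * (rotMat φ * reflMat) * Bᵀ = rotMat (θ₀ + φ) * reflMat := by
    intro φ
    rw [hBdef, rot_transpose]
    rw [show rotMat (θ₀ / 2) * (rotMat φ * reflMat) * rotMat (-(θ₀ / 2))
        = (rotMat (θ₀ / 2) * rotMat φ) * (reflMat * rotMat (-(θ₀ / 2))) by noncomm_ring]
    rw [refl_rot, rot_mul, neg_neg]
    rw [show rotMat (θ₀ / 2 + φ) * (rotMat (θ₀ / 2) * reflMat)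
        = (rotMat (θ₀ / 2 + φ) * rotMat (θ₀ / 2)) * reflMat by noncomm_ring]
    rw [rot_mul]
    congr 2
    ring
  have hIm : (fun A => B * A * Bᵀ) '' DihSet m =
      {A | (∃ n : ℤ, A = rotMat (2 * π * n / m)) ∨
        ∃ n : ℤ, A = rotMat (θ₀ + 2 * π * n / m) * reflMat} := by
    ext A
    constructor
    · rintro ⟨A₀, ⟨k, hk, hA₀⟩, rfl⟩
      dsimp only
      rcases hA₀ with rfl | rfl
      · left
        refine ⟨k, ?_⟩
        rw [hconj_rot]
        norm_cast
      · right
        refine ⟨k, ?_⟩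
        rw [hconj_refl]
        norm_cast
    · rintro (⟨n, rfl⟩ | ⟨n, rfl⟩)
      · set k : ℕ := (n % (m : ℤ)).toNat with hkdef
        have hmpos : (0 : ℤ) < (m : ℤ) := by exact_mod_cast Nat.lt_of_lt_of_le Nat.zero_lt_one hm1
        have hk1 : ((k : ℕ) : ℤ) = n % (m : ℤ) := Int.toNat_of_nonneg (Int.emod_nonneg n hmpos.ne')
        have hklt : k < m := by
          have h1 := Int.emod_lt_of_pos n hmpos
          have h2 := Int.emod_nonneg n hmpos.ne'
          omega
        refine ⟨rotMat (2 * π * k / m), ⟨k, hklt, Or.inl rfl⟩, ?_⟩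
        dsimp only
        rw [hconj_rot]
        have hper : rotMat (2 * π * k / m) = rotMat (2 * π * n / m) := by
          have hdm : ((m : ℤ) * (n / (m : ℤ)) + n % (m : ℤ) : ℤ) = n := Int.mul_ediv_add_emod n m
          have hdmR : (m : ℝ) * ((n / (m : ℤ) : ℤ) : ℝ) + ((n % (m : ℤ) : ℤ) : ℝ) = (n : ℝ) := by
            exact_mod_cast hdm
          have hsplit : 2 * π * (n : ℝ) / m = 2 * π * (k : ℝ) / m + 2 * π * ((n / (m : ℤ) : ℤ) : ℝ) := by
            rw [show ((k : ℕ) : ℝ) = ((n % (m : ℤ) : ℤ) : ℝ) by exact_mod_cast hk1, ← hdmR]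
            field_simp
            ring
          rw [hsplit, rot_per]
        rw [hper]
      · set k : ℕ := (n % (m : ℤ)).toNat with hkdef
        have hmpos : (0 : ℤ) < (m : ℤ) := by exact_mod_cast Nat.lt_of_lt_of_le Nat.zero_lt_one hm1
        have hk1 : ((k : ℕ) : ℤ) = n % (m : ℤ) := Int.toNat_of_nonneg (Int.emod_nonneg n hmpos.ne')
        have hklt : k < m := by
          have h1 := Int.emod_lt_of_pos n hmpos
          have h2 := Int.emod_nonneg n hmpos.ne'
          omega
        refine ⟨rotMat (2 * π * k / m) * reflMat, ⟨k, hklt, Or.inr rfl⟩, ?_⟩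
        dsimp only
        rw [hconj_refl]
        have hper : rotMat (θ₀ + 2 * π * k / m) = rotMat (θ₀ + 2 * π * n / m) := by
          have hdm : ((m : ℤ) * (n / (m : ℤ)) + n % (m : ℤ) : ℤ) = n := Int.mul_ediv_add_emod n m
          have hdmR : (m : ℝ) * ((n / (m : ℤ) : ℤ) : ℝ) + ((n % (m : ℤ) : ℤ) : ℝ) = (n : ℝ) := by
            exact_mod_cast hdm
          have : θ₀ + 2 * π * (n : ℝ) / m
              = (θ₀ + 2 * π * (k : ℝ) / m) + 2 * π * ((n / (m : ℤ) : ℤ) : ℝ) := by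
            rw [show ((k : ℕ) : ℝ) = ((n % (m : ℤ) : ℤ) : ℝ) by exact_mod_cast hk1, ← hdmR]
            field_simp
            ring
          rw [this, rot_per]
        rw [hper]
  constructor
  · exact ⟨B, rot_orth _, by rw [hstab, hIm]⟩
  · rw [hstab]
    have hsub : CycSet m ⊆ {A | (∃ n : ℤ, A = rotMat (2 * π * n / m)) ∨
        ∃ n : ℤ, A = rotMat (θ₀ + 2 * π * n / m) * reflMat} := by
      rintro A ⟨k, hk, rfl⟩
      left
      refine ⟨k, ?_⟩
      norm_cast
    refine (Set.ssubset_iff_of_subset hsub).mpr ⟨rotMat θ₀ * reflMat, ?_, ?_⟩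
    · right
      refine ⟨0, ?_⟩
      congr 2
      norm_num
    · rintro ⟨k, hk, heq⟩
      have d2 : (rotMat θ₀ * reflMat).det = -1 := by
        rw [Matrix.det_mul, rot_det, refl_det]; norm_num
      rw [heq, rot_det] at d2
      norm_num at d2
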